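/- Let d ≥ 1, let 0 ≤ m ≤ d, let ρ be any bijection of {0,1}^d, and let G be the pair of d-dimensional butterflies with gluing bijection ρ. Then for every set A of input nodes and every set B of output nodes with |A| = |B| = 2^d − 2^m, there exists a node-disjoint routing from A to B. -/

import Mathlib

set_option linter.unusedSectionVars false
set_option maxHeartbeats 1000000


/-- Edge relation of a pair of `d`-dimensional standard butterflies glued by the
bijection `ρ` of `{0,1}^d`: the layer-`d` vertex labelled `b` of the left butterfly
(layers `0,…,d`) is identified with the layer-`d` input vertex labelled `ρ b` of the
right butterfly (layers `d,…,2d`).  `pairStep d ρ i b b'` says there is a directed edge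
from the vertex with label `b` on layer `i` to the vertex with label `b'` on layer
`i+1`. -/
def pairStep (d : ℕ) (ρ : (Fin d → Bool) ≃ (Fin d → Bool)) (i : ℕ)
    (b b' : Fin d → Bool) : Prop :=
  if h : i < d then
    ∀ k : Fin d, k ≠ ⟨i, h⟩ → b k = b' k
  else if h' : i < 2 * d then
    ∀ k : Fin d, k ≠ (⟨i - d, by omega⟩ : Fin d) →
      (if i = d then ρ b else b) k = b' k
  else False


open Finset

namespace LayeredMenger

variable {T : Type*} [DecidableEq T] [Fintype T]

/-- A node of the doubled-layer graph: (doubled-layer index, label). -/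
abbrev Node (T : Type*) := ℕ × T

variable (step : ℕ → T → T → Prop) (L : ℕ)

/-- doubled-layer step relation: even layers carry "capacity edges" (label preserved),
odd layers carry the real step edges. -/
def dstep (n m : Node T) : Prop :=
  n.1 < 2 * L + 1 ∧ m.1 = n.1 + 1 ∧
    ((n.1 % 2 = 0 ∧ m.2 = n.2) ∨ (n.1 % 2 = 1 ∧ step (n.1 / 2) n.2 m.2))

variable (A B : Finset T)

noncomputable def outF (F : Finset (Node T × Node T)) (n : Node T) : ℕ :=
  (F.filter (fun e => e.1 = n)).card

noncomputable def inF (F : Finset (Node T × Node T)) (n : Node T) : ℕ :=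
  (F.filter (fun e => e.2 = n)).card

structure IsFlow (F : Finset (Node T × Node T)) (t : ℕ) : Prop where
  wf : ∀ e ∈ F, dstep step L e.1 e.2
  cons : ∀ n : Node T, 0 < n.1 → n.1 < 2 * L + 1 → outF F n = inF F n
  srcA : ∀ v : T, 0 < outF F (0, v) → v ∈ A
  snkB : ∀ v : T, 0 < inF F (2 * L + 1, v) → v ∈ B
  val : (A.filter (fun a => 0 < outF F (0, a))).card = t

/-- residual step -/
def rstep (F : Finset (Node T × Node T)) (n m : Node T) : Prop :=
  (dstep step L n m ∧ (n, m) ∉ F) ∨ (dstep step L m n ∧ (m, n) ∈ F)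

def Reach (F : Finset (Node T × Node T)) (n : Node T) : Prop :=
  ∃ a ∈ A, Relation.ReflTransGen (rstep step L F) (0, a) n

theorem edge_of_even (F : Finset (Node T × Node T))
    (hwf : ∀ e ∈ F, dstep step L e.1 e.2) (j : ℕ) (hj : j % 2 = 0) (v : T) :
    ∀ e ∈ F, e.1 = (j, v) → e = ((j, v), (j + 1, v)) := by
  intro e he h1
  obtain ⟨hlt, hsucc, hpar⟩ := hwf e he
  rcases hpar with ⟨hp, hl⟩ | ⟨hp, _⟩
  · have : e.2 = (j + 1, v) := by
      have h2 : e.2.1 = j + 1 := by rw [hsucc, h1]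
      have h3 : e.2.2 = v := by rw [hl, h1]
      exact Prod.ext h2 h3
    rw [← h1, ← this]
  · rw [h1] at hp; omega

theorem edge_of_odd_head (F : Finset (Node T × Node T))
    (hwf : ∀ e ∈ F, dstep step L e.1 e.2) (j : ℕ) (hj : j % 2 = 1) (v : T) :
    ∀ e ∈ F, e.2 = (j, v) → e = ((j - 1, v), (j, v)) := by
  intro e he h2
  obtain ⟨hlt, hsucc, hpar⟩ := hwf e he
  have hej : e.1.1 = j - 1 := by rw [h2] at hsucc; omega
  have hpar0 : e.1.1 % 2 = 0 := by omega
  rcases hpar with ⟨hp, hl⟩ | ⟨hp, _⟩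
  · have : e.1 = (j - 1, v) := by
      refine Prod.ext hej ?_
      have : e.2.2 = e.1.2 := hl
      rw [h2] at this; exact this.symm
    rw [← h2, ← this]
  · omega

theorem out_even_le (F : Finset (Node T × Node T))
    (hwf : ∀ e ∈ F, dstep step L e.1 e.2) (j : ℕ) (hj : j % 2 = 0) (v : T) :
    outF F (j, v) ≤ 1 := by
  apply Finset.card_le_one.mpr
  intro e he e' he'
  simp only [mem_filter] at he he'
  rw [edge_of_even step L F hwf j hj v e he.1 he.2,
      edge_of_even step L F hwf j hj v e' he'.1 he'.2]

theorem in_odd_le (F : Finset (Node T × Node T))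
    (hwf : ∀ e ∈ F, dstep step L e.1 e.2) (j : ℕ) (hj : j % 2 = 1) (v : T) :
    inF F (j, v) ≤ 1 := by
  apply Finset.card_le_one.mpr
  intro e he e' he'
  simp only [mem_filter] at he he'
  rw [edge_of_odd_head step L F hwf j hj v e he.1 he.2,
      edge_of_odd_head step L F hwf j hj v e' he'.1 he'.2]


section DegreeBounds

variable {step : ℕ → T → T → Prop} {L : ℕ} {A B : Finset T}
variable {F : Finset (Node T × Node T)} {t : ℕ}

theorem outF_empty_of_top (hwf : ∀ e ∈ F, dstep step L e.1 e.2) {j : ℕ}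
    (hj : 2 * L + 1 ≤ j) (v : T) : outF F (j, v) = 0 := by
  rw [outF, Finset.card_eq_zero, Finset.filter_eq_empty_iff]
  intro e he h1
  have := (hwf e he).1
  rw [h1] at this
  omega

theorem inF_zero_layer (hwf : ∀ e ∈ F, dstep step L e.1 e.2) (v : T) :
    inF F (0, v) = 0 := by
  rw [inF, Finset.card_eq_zero, Finset.filter_eq_empty_iff]
  intro e he h2
  have := (hwf e he).2.1
  rw [h2] at this
  omega

theorem inF_empty_of_top (hwf : ∀ e ∈ F, dstep step L e.1 e.2) {j : ℕ}
    (hj : 2 * L + 1 < j) (v : T) : inF F (j, v) = 0 := by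
  rw [inF, Finset.card_eq_zero, Finset.filter_eq_empty_iff]
  intro e he h2
  have h1 := (hwf e he).1
  have h3 := (hwf e he).2.1
  rw [h2] at h3
  omega

theorem IsFlow.outLe (hF : IsFlow step L A B F t) (n : Node T) : outF F n ≤ 1 := by
  obtain ⟨j, v⟩ := n
  rcases Nat.even_or_odd j with hj | hj
  · exact out_even_le step L F hF.wf j (Nat.even_iff.mp hj) v
  · by_cases hlt : j < 2 * L + 1
    · rw [hF.cons (j, v) (by have := Nat.odd_iff.mp hj; omega) hlt]
      exact in_odd_le step L F hF.wf j (Nat.odd_iff.mp hj) v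
    · rw [outF_empty_of_top hF.wf (by omega) v]; omega

theorem IsFlow.inLe (hF : IsFlow step L A B F t) (n : Node T) : inF F n ≤ 1 := by
  obtain ⟨j, v⟩ := n
  rcases Nat.even_or_odd j with hj | hj
  · rcases Nat.eq_zero_or_pos j with h0 | h0
    · subst h0; rw [inF_zero_layer hF.wf]; omega
    · by_cases hlt : j < 2 * L + 1
      · rw [← hF.cons (j, v) h0 hlt]
        exact out_even_le step L F hF.wf j (Nat.even_iff.mp hj) v
      · have : j ≠ 2 * L + 1 := by
          intro h; rw [h] at hj; rw [Nat.even_iff] at hj; omega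
        rw [inF_empty_of_top hF.wf (by omega) v]; omega
  · exact in_odd_le step L F hF.wf j (Nat.odd_iff.mp hj) v

end DegreeBounds

section Toggle

variable {step : ℕ → T → T → Prop} {L : ℕ} {A B : Finset T}
variable {F : Finset (Node T × Node T)} {t : ℕ}

/-- step `i` of the walk goes forward (up a layer). -/
def Fwd (q : ℕ → Node T) (i : ℕ) : Prop := (q (i+1)).1 = (q i).1 + 1

instance (q : ℕ → Node T) (i : ℕ) : Decidable (Fwd q i) := by
  unfold Fwd; infer_instance

def fwdE (q : ℕ → Node T) (n : ℕ) : Finset (Node T × Node T) :=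
  ((range n).filter (fun i => Fwd q i)).image (fun i => (q i, q (i+1)))

def bwdE (q : ℕ → Node T) (n : ℕ) : Finset (Node T × Node T) :=
  ((range n).filter (fun i => ¬ Fwd q i)).image (fun i => (q (i+1), q i))

theorem card_filter_image_pair (s : Finset ℕ) (f : ℕ → Node T × Node T)
    (p : Node T × Node T → Prop) [DecidablePred p]
    (huniq : ∀ i ∈ s, ∀ j ∈ s, p (f i) → p (f j) → i = j) :
    ((s.image f).filter p).card = if ∃ i ∈ s, p (f i) then 1 else 0 := by
  rw [Finset.filter_image]
  split_ifs with h
  · obtain ⟨i₀, hi₀s, hpi₀⟩ := h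
    have he : s.filter (fun i => p (f i)) = {i₀} := by
      ext j
      simp only [Finset.mem_filter, Finset.mem_singleton]
      constructor
      · rintro ⟨hjs, hpj⟩
        exact huniq j hjs i₀ hi₀s hpj hpi₀
      · rintro rfl
        exact ⟨hi₀s, hpi₀⟩
    rw [he, Finset.image_singleton, Finset.card_singleton]
  · have he : s.filter (fun i => p (f i)) = ∅ := by
      rw [Finset.filter_eq_empty_iff]
      intro j hj hpj
      exact h ⟨j, hj, hpj⟩
    rw [he, Finset.image_empty, Finset.card_empty]

section WalkFacts

variable {q : ℕ → Node T} {n : ℕ}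
variable (hw : ∀ i < n, rstep step L F (q i) (q (i+1)))
variable (hinj : ∀ i ≤ n, ∀ j ≤ n, q i = q j → i = j)

include hw in
theorem step_cases {i : ℕ} (hi : i < n) :
    (Fwd q i ∧ dstep step L (q i) (q (i+1)) ∧ (q i, q (i+1)) ∉ F) ∨
    (¬ Fwd q i ∧ dstep step L (q (i+1)) (q i) ∧ (q (i+1), q i) ∈ F) := by
  rcases hw i hi with ⟨hd, hnF⟩ | ⟨hd, hF'⟩
  · exact Or.inl ⟨hd.2.1, hd, hnF⟩
  · refine Or.inr ⟨?_, hd, hF'⟩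
    have := hd.2.1
    unfold Fwd
    omega

include hw in
theorem bwdE_subset : bwdE q n ⊆ F := by
  intro e he
  simp only [bwdE, mem_image, mem_filter, mem_range] at he
  obtain ⟨i, ⟨hi, hnf⟩, rfl⟩ := he
  rcases step_cases hw hi with ⟨hf, -, -⟩ | ⟨-, -, hF'⟩
  · exact absurd hf hnf
  · exact hF'

include hw in
theorem fwdE_disj : ∀ e ∈ fwdE q n, e ∉ F := by
  intro e he
  simp only [fwdE, mem_image, mem_filter, mem_range] at he
  obtain ⟨i, ⟨hi, hf⟩, rfl⟩ := he
  rcases step_cases hw hi with ⟨-, -, hnF⟩ | ⟨hnf, -, -⟩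
  · exact hnF
  · exact absurd hf hnf

include hinj in
theorem outF_fwdE (x : Node T) :
    outF (fwdE q n) x =
      if ∃ i, i < n ∧ Fwd q i ∧ q i = x then 1 else 0 := by
  unfold outF fwdE
  rw [card_filter_image_pair _ _ _ ?uniq]
  case uniq =>
    intro i hi j hj hpi hpj
    simp only [mem_filter, mem_range] at hi hj
    exact hinj i hi.1.le j hj.1.le (by rw [show q i = x from hpi, show q j = x from hpj])
  apply if_congr _ rfl rfl
  constructor
  · rintro ⟨i, hi, hp⟩
    simp only [mem_filter, mem_range] at hi
    exact ⟨i, hi.1, hi.2, hp⟩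
  · rintro ⟨i, h1, h2, h3⟩
    exact ⟨i, by simp only [mem_filter, mem_range]; exact ⟨h1, h2⟩, h3⟩

include hinj in
theorem inF_fwdE (x : Node T) :
    inF (fwdE q n) x =
      if ∃ i, i < n ∧ Fwd q i ∧ q (i+1) = x then 1 else 0 := by
  unfold inF fwdE
  rw [card_filter_image_pair _ _ _ ?uniq]
  case uniq =>
    intro i hi j hj hpi hpj
    simp only [mem_filter, mem_range] at hi hj
    have := hinj (i+1) hi.1 (j+1) hj.1
      (by rw [show q (i+1) = x from hpi, show q (j+1) = x from hpj])
    omega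
  apply if_congr _ rfl rfl
  constructor
  · rintro ⟨i, hi, hp⟩
    simp only [mem_filter, mem_range] at hi
    exact ⟨i, hi.1, hi.2, hp⟩
  · rintro ⟨i, h1, h2, h3⟩
    exact ⟨i, by simp only [mem_filter, mem_range]; exact ⟨h1, h2⟩, h3⟩

include hinj in
theorem outF_bwdE (x : Node T) :
    outF (bwdE q n) x =
      if ∃ i, i < n ∧ ¬ Fwd q i ∧ q (i+1) = x then 1 else 0 := by
  unfold outF bwdE
  rw [card_filter_image_pair _ _ _ ?uniq]
  case uniq =>
    intro i hi j hj hpi hpj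
    simp only [mem_filter, mem_range] at hi hj
    have := hinj (i+1) hi.1 (j+1) hj.1
      (by rw [show q (i+1) = x from hpi, show q (j+1) = x from hpj])
    omega
  apply if_congr _ rfl rfl
  constructor
  · rintro ⟨i, hi, hp⟩
    simp only [mem_filter, mem_range] at hi
    exact ⟨i, hi.1, hi.2, hp⟩
  · rintro ⟨i, h1, h2, h3⟩
    exact ⟨i, by simp only [mem_filter, mem_range]; exact ⟨h1, h2⟩, h3⟩

include hinj in
theorem inF_bwdE (x : Node T) :
    inF (bwdE q n) x =
      if ∃ i, i < n ∧ ¬ Fwd q i ∧ q i = x then 1 else 0 := by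
  unfold inF bwdE
  rw [card_filter_image_pair _ _ _ ?uniq]
  case uniq =>
    intro i hi j hj hpi hpj
    simp only [mem_filter, mem_range] at hi hj
    exact hinj i hi.1.le j hj.1.le (by rw [show q i = x from hpi, show q j = x from hpj])
  apply if_congr _ rfl rfl
  constructor
  · rintro ⟨i, hi, hp⟩
    simp only [mem_filter, mem_range] at hi
    exact ⟨i, hi.1, hi.2, hp⟩
  · rintro ⟨i, h1, h2, h3⟩
    exact ⟨i, by simp only [mem_filter, mem_range]; exact ⟨h1, h2⟩, h3⟩


theorem le_outF_of_mem {F : Finset (Node T × Node T)} {e : Node T × Node T} {x : Node T}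
    (he : e ∈ F) (hx : e.1 = x) : 1 ≤ outF F x :=
  Finset.card_pos.mpr ⟨e, Finset.mem_filter.mpr ⟨he, hx⟩⟩

theorem le_inF_of_mem {F : Finset (Node T × Node T)} {e : Node T × Node T} {x : Node T}
    (he : e ∈ F) (hx : e.2 = x) : 1 ≤ inF F x :=
  Finset.card_pos.mpr ⟨e, Finset.mem_filter.mpr ⟨he, hx⟩⟩

theorem card_toggle_aux {α : Type*} [DecidableEq α] (F G H : Finset α) (p : α → Prop)
    [DecidablePred p] (hGF : G ⊆ F) (hHF : ∀ e ∈ H, e ∉ F) :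
    (((F \ G) ∪ H).filter p).card
      = (F.filter p).card - (G.filter p).card + (H.filter p).card := by
  have h1 : ((F \ G) ∪ H).filter p = ((F.filter p) \ (G.filter p)) ∪ (H.filter p) := by
    ext e
    simp only [Finset.mem_filter, Finset.mem_union, Finset.mem_sdiff]
    tauto
  rw [h1, Finset.card_union_of_disjoint, Finset.card_sdiff_of_subset (Finset.filter_subset_filter p hGF)]
  · rw [Finset.disjoint_left]
    intro e he heH
    have heF := (Finset.mem_filter.mp (Finset.mem_sdiff.mp he).1).1
    exact hHF e (Finset.mem_filter.mp heH).1 heF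

def toggled (F : Finset (Node T × Node T)) (q : ℕ → Node T) (n : ℕ) :
    Finset (Node T × Node T) := (F \ bwdE q n) ∪ fwdE q n

include hw in
theorem outF_toggled (x : Node T) :
    outF (toggled F q n) x = outF F x - outF (bwdE q n) x + outF (fwdE q n) x :=
  card_toggle_aux F (bwdE q n) (fwdE q n) (fun e => e.1 = x) (bwdE_subset hw) (fwdE_disj hw)

include hw in
theorem inF_toggled (x : Node T) :
    inF (toggled F q n) x = inF F x - inF (bwdE q n) x + inF (fwdE q n) x :=
  card_toggle_aux F (bwdE q n) (fwdE q n) (fun e => e.2 = x) (bwdE_subset hw) (fwdE_disj hw)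

end WalkFacts

section ToggleMain

variable {q : ℕ → Node T} {n : ℕ} {a b : T}
variable (hF : IsFlow step L A B F t)
variable (hq0 : q 0 = ((0:ℕ), a)) (hqn : q n = (2*L+1, b))
variable (ha : a ∈ A) (hb : b ∈ B)
variable (hw : ∀ i < n, rstep step L F (q i) (q (i+1)))
variable (hinj : ∀ i ≤ n, ∀ j ≤ n, q i = q j → i = j)

include hq0 hqn in
theorem walk_pos : 0 < n := by
  rcases Nat.eq_zero_or_pos n with h | h
  · subst h
    rw [hq0] at hqn
    have := congrArg Prod.fst hqn
    simp at this
  · exact h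

include hq0 hqn hw hinj in
theorem walk_layer0 : ∀ i ≤ n, (q i).1 = 0 → i = 0 := by
  intro i hin h0
  by_contra hne
  have hipos : 0 < i := Nat.pos_of_ne_zero hne
  have him1 : i - 1 < n := by omega
  have hii : i - 1 + 1 = i := by omega
  rcases step_cases hw him1 with ⟨hf, -, -⟩ | ⟨-, hd, hmem⟩
  · rw [Fwd, hii] at hf
    omega
  · rw [hii] at hd hmem
    -- hd : dstep (q i) (q (i-1)), so q (i-1) = (1, (q i).2)
    obtain ⟨-, hL1, hpar⟩ := hd
    have hpar0 : (q i).1 % 2 = 0 := by omega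
    rcases hpar with ⟨-, hlab⟩ | ⟨hodd, -⟩
    · have hqim1 : q (i-1) = (1, (q i).2) := Prod.ext (by omega) hlab
      have hilt : i < n := by
        rcases Nat.lt_or_ge i n with h | h
        · exact h
        · have : i = n := by omega
          subst this
          rw [hqn] at h0
          simp at h0
      rcases step_cases hw hilt with ⟨-, hd2, hnmem⟩ | ⟨-, hd2, -⟩
      · obtain ⟨-, hL2, hpar2⟩ := hd2
        rcases hpar2 with ⟨-, hlab2⟩ | ⟨hodd2, -⟩
        · have hqip1 : q (i+1) = (1, (q i).2) := Prod.ext (by omega) hlab2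
          have : i + 1 = i - 1 := by
            apply hinj (i+1) (by omega) (i-1) (by omega)
            rw [hqip1, hqim1]
          omega
        · omega
      · have := hd2.2.1
        omega
    · omega

include hq0 hqn hw hinj in
theorem walk_layerTop : ∀ i ≤ n, (q i).1 = 2*L+1 → i = n := by
  intro i hin hT
  by_contra hne
  have hilt : i < n := by omega
  have hipos : 0 < i := by
    rcases Nat.eq_zero_or_pos i with h | h
    · exfalso
      subst h
      rw [hq0] at hT
      simp at hT
    · exact h
  rcases step_cases hw hilt with ⟨-, hd, -⟩ | ⟨-, hd, -⟩
  · have := hd.1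
    omega
  · -- hd : dstep (q (i+1)) (q i)
    obtain ⟨-, hL1, hpar⟩ := hd
    have hpar0 : (q (i+1)).1 % 2 = 0 := by omega
    rcases hpar with ⟨-, hlab⟩ | ⟨hodd, -⟩
    · have hqip1 : q (i+1) = (2*L, (q i).2) := Prod.ext (by omega) hlab.symm

      have him1 : i - 1 < n := by omega
      have hii : i - 1 + 1 = i := by omega
      rcases step_cases hw him1 with ⟨-, hd2, -⟩ | ⟨-, hd2, -⟩
      · rw [hii] at hd2
        obtain ⟨-, hL2, hpar2⟩ := hd2
        have hpar20 : (q (i-1)).1 % 2 = 0 := by omega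
        rcases hpar2 with ⟨-, hlab2⟩ | ⟨hodd2, -⟩
        · have hqim1 : q (i-1) = (2*L, (q i).2) := Prod.ext (by omega) hlab2.symm
          have : i + 1 = i - 1 := by
            apply hinj (i+1) (by omega) (i-1) (by omega)
            rw [hqip1, hqim1]
          omega
        · omega
      · rw [hii] at hd2
        have := hd2.1
        omega
    · omega

include hq0 hqn hw in
theorem walk_first_fwd : Fwd q 0 ∧ q 1 = ((1:ℕ), a) ∧ (q 0, q 1) ∉ F := by
  have hn := walk_pos hq0 hqn
  rcases step_cases hw hn with ⟨hf, hd, hnmem⟩ | ⟨-, hd, -⟩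
  · obtain ⟨-, hL1, hpar⟩ := hd
    rcases hpar with ⟨-, hlab⟩ | ⟨hodd, -⟩
    · refine ⟨hf, Prod.ext (by rw [hL1, hq0]) (by rw [hlab, hq0]), hnmem⟩
    · rw [hq0] at hodd
      simp at hodd
  · have := hd.2.1
    rw [hq0] at this
    simp at this

include hq0 hqn hw in
theorem walk_last_fwd : Fwd q (n-1) ∧ q (n-1) = (2*L, b) ∧ (q (n-1), q n) ∉ F := by
  have hn := walk_pos hq0 hqn
  have him1 : n - 1 < n := by omega
  have hii : n - 1 + 1 = n := by omega
  rcases step_cases hw him1 with ⟨hf, hd, hnmem⟩ | ⟨-, hd, -⟩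
  · rw [hii] at hd hnmem
    obtain ⟨hL0, hL1, hpar⟩ := hd
    rcases hpar with ⟨-, hlab⟩ | ⟨hodd, -⟩
    · have h1 : (q (n-1)).1 = 2*L := by
        rw [hqn] at hL1
        simp at hL1
        omega
      have h2 : (q (n-1)).2 = b := by
        rw [hqn] at hlab
        simpa using hlab.symm
      exact ⟨hf, Prod.ext h1 h2, hnmem⟩
    · exfalso
      have h1 : (q (n-1)).1 = 2*L := by
        rw [hqn] at hL1
        simp at hL1
        omega
      omega
  · exfalso
    rw [hii] at hd
    have h1 := hd.1
    rw [hqn] at h1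
    simp at h1

include hq0 hqn hw in
theorem outF_source_zero (hwf : ∀ e ∈ F, dstep step L e.1 e.2) : outF F ((0:ℕ), a) = 0 := by
  obtain ⟨-, hq1, hnmem⟩ := walk_first_fwd hq0 hqn hw
  rw [outF, Finset.card_eq_zero, Finset.filter_eq_empty_iff]
  intro e he h1
  have := edge_of_even step L F hwf 0 (by omega) a e he h1
  rw [this] at he
  rw [← hq0, ← hq1] at he
  exact hnmem he

include hq0 hqn hw in
theorem inF_sink_zero (hwf : ∀ e ∈ F, dstep step L e.1 e.2) : inF F (2*L+1, b) = 0 := by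
  obtain ⟨-, hqm1, hnmem⟩ := walk_last_fwd hq0 hqn hw
  rw [inF, Finset.card_eq_zero, Finset.filter_eq_empty_iff]
  intro e he h2
  have := edge_of_odd_head step L F hwf (2*L+1) (by omega) b e he h2
  have h3 : e = ((2*L, b), (2*L+1, b)) := by
    rw [this]
    have : 2*L+1-1 = 2*L := by omega
    rw [this]
  rw [h3, ← hqm1, ← hqn] at he
  exact hnmem he

include hF hq0 hqn hw hinj in
theorem cons_toggled : ∀ x : Node T, 0 < x.1 → x.1 < 2*L+1 →
    outF (toggled F q n) x = inF (toggled F q n) x := by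
  intro x h1 h2
  rw [outF_toggled hw x, inF_toggled hw x, outF_fwdE hinj x, inF_fwdE hinj x,
    outF_bwdE hinj x, inF_bwdE hinj x]
  have hcons := hF.cons x h1 h2
  by_cases hocc : ∃ i, i ≤ n ∧ q i = x
  · obtain ⟨i, hin, hqi⟩ := hocc
    have hi0 : i ≠ 0 := by
      intro h
      subst h
      rw [hq0] at hqi
      rw [← hqi] at h1
      simp at h1
    have hiN : i ≠ n := by
      intro h
      subst h
      rw [hqn] at hqi
      rw [← hqi] at h2
      simp at h2
    have hilt : i < n := by omega
    have hii : i - 1 + 1 = i := by omega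
    have e1 : (∃ j, j < n ∧ Fwd q j ∧ q j = x) ↔ Fwd q i := by
      constructor
      · rintro ⟨j, hj, hfj, hqj⟩
        have : j = i := hinj j hj.le i hin (by rw [hqj, hqi])
        rwa [this] at hfj
      · intro hf
        exact ⟨i, hilt, hf, hqi⟩
    have e4 : (∃ j, j < n ∧ ¬ Fwd q j ∧ q j = x) ↔ ¬ Fwd q i := by
      constructor
      · rintro ⟨j, hj, hfj, hqj⟩
        have : j = i := hinj j hj.le i hin (by rw [hqj, hqi])
        rwa [this] at hfj
      · intro hf
        exact ⟨i, hilt, hf, hqi⟩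
    have e2 : (∃ j, j < n ∧ Fwd q j ∧ q (j+1) = x) ↔ Fwd q (i-1) := by
      constructor
      · rintro ⟨j, hj, hfj, hqj⟩
        have hj1 : j + 1 = i := hinj (j+1) (by omega) i hin (by rw [hqj, hqi])
        have : j = i - 1 := by omega
        rwa [this] at hfj
      · intro hf
        exact ⟨i-1, by omega, hf, by rw [hii, hqi]⟩
    have e3 : (∃ j, j < n ∧ ¬ Fwd q j ∧ q (j+1) = x) ↔ ¬ Fwd q (i-1) := by
      constructor
      · rintro ⟨j, hj, hfj, hqj⟩
        have hj1 : j + 1 = i := hinj (j+1) (by omega) i hin (by rw [hqj, hqi])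
        have : j = i - 1 := by omega
        rwa [this] at hfj
      · intro hf
        exact ⟨i-1, by omega, hf, by rw [hii, hqi]⟩
    simp only [e1, e2, e3, e4]
    by_cases hfp : Fwd q (i-1) <;> by_cases hfi : Fwd q i
    · simp only [if_pos hfp, if_pos hfi, if_neg (not_not_intro hfp), if_neg (not_not_intro hfi)]
      omega
    · have hmem : (q (i+1), q i) ∈ F := by
        rcases step_cases hw hilt with ⟨hf, -, -⟩ | ⟨-, -, hm⟩
        · exact absurd hf hfi
        · exact hm
      have hin1 : 1 ≤ inF F x := le_inF_of_mem hmem (by rw [hqi])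
      simp only [if_pos hfp, if_neg hfi, if_neg (not_not_intro hfp), if_pos hfi]
      omega
    · have hmem : (q i, q (i-1)) ∈ F := by
        rcases step_cases hw (show i - 1 < n by omega) with ⟨hf, -, -⟩ | ⟨-, -, hm⟩
        · exact absurd hf hfp
        · rwa [hii] at hm
      have hout1 : 1 ≤ outF F x := le_outF_of_mem hmem (by rw [hqi])
      simp only [if_neg hfp, if_pos hfi, if_pos hfp, if_neg (not_not_intro hfi)]
      omega
    · have hmem : (q (i+1), q i) ∈ F := by
        rcases step_cases hw hilt with ⟨hf, -, -⟩ | ⟨-, -, hm⟩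
        · exact absurd hf hfi
        · exact hm
      have hin1 : 1 ≤ inF F x := le_inF_of_mem hmem (by rw [hqi])
      have hmem2 : (q i, q (i-1)) ∈ F := by
        rcases step_cases hw (show i - 1 < n by omega) with ⟨hf, -, -⟩ | ⟨-, -, hm⟩
        · exact absurd hf hfp
        · rwa [hii] at hm
      have hout1 : 1 ≤ outF F x := le_outF_of_mem hmem2 (by rw [hqi])
      simp only [if_neg hfp, if_neg hfi, if_pos hfp, if_pos hfi]
      omega
  · have c1 : ¬ ∃ j, j < n ∧ Fwd q j ∧ q j = x := by
      rintro ⟨j, hj, -, hqj⟩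
      exact hocc ⟨j, hj.le, hqj⟩
    have c2 : ¬ ∃ j, j < n ∧ Fwd q j ∧ q (j+1) = x := by
      rintro ⟨j, hj, -, hqj⟩
      exact hocc ⟨j+1, by omega, hqj⟩
    have c3 : ¬ ∃ j, j < n ∧ ¬ Fwd q j ∧ q (j+1) = x := by
      rintro ⟨j, hj, -, hqj⟩
      exact hocc ⟨j+1, by omega, hqj⟩
    have c4 : ¬ ∃ j, j < n ∧ ¬ Fwd q j ∧ q j = x := by
      rintro ⟨j, hj, -, hqj⟩
      exact hocc ⟨j, hj.le, hqj⟩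
    rw [if_neg c1, if_neg c2, if_neg c3, if_neg c4]
    omega

include hq0 hqn hw hinj in
theorem out_toggled_layer0_ne (v : T) (hv : v ≠ a) :
    outF (toggled F q n) ((0:ℕ), v) = outF F ((0:ℕ), v) := by
  rw [outF_toggled hw, outF_fwdE hinj, outF_bwdE hinj]
  have c1 : ¬ ∃ j, j < n ∧ Fwd q j ∧ q j = ((0:ℕ), v) := by
    rintro ⟨j, hj, -, hqj⟩
    have hj0 := walk_layer0 hq0 hqn hw hinj j hj.le (by rw [hqj])
    subst hj0
    rw [hq0] at hqj
    exact hv (congrArg Prod.snd hqj).symm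
  have c2 : ¬ ∃ j, j < n ∧ ¬ Fwd q j ∧ q (j+1) = ((0:ℕ), v) := by
    rintro ⟨j, hj, -, hqj⟩
    have := walk_layer0 hq0 hqn hw hinj (j+1) (by omega) (by rw [hqj])
    omega
  rw [if_neg c1, if_neg c2]
  omega

include hq0 hqn hw hinj in
theorem out_toggled_source (hwf : ∀ e ∈ F, dstep step L e.1 e.2) :
    outF (toggled F q n) ((0:ℕ), a) = 1 := by
  rw [outF_toggled hw, outF_fwdE hinj, outF_bwdE hinj]
  have c2 : ¬ ∃ j, j < n ∧ ¬ Fwd q j ∧ q (j+1) = ((0:ℕ), a) := by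
    rintro ⟨j, hj, -, hqj⟩
    have := walk_layer0 hq0 hqn hw hinj (j+1) (by omega) (by rw [hqj])
    omega
  have c1 : ∃ j, j < n ∧ Fwd q j ∧ q j = ((0:ℕ), a) :=
    ⟨0, walk_pos hq0 hqn, (walk_first_fwd hq0 hqn hw).1, hq0⟩
  rw [if_pos c1, if_neg c2, outF_source_zero hq0 hqn hw hwf]

include hq0 hqn hw hinj in
theorem in_toggled_top_ne (v : T) (hv : v ≠ b) :
    inF (toggled F q n) (2*L+1, v) = inF F (2*L+1, v) := by
  rw [inF_toggled hw, inF_fwdE hinj, inF_bwdE hinj]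
  have c1 : ¬ ∃ j, j < n ∧ Fwd q j ∧ q (j+1) = ((2*L+1 : ℕ), v) := by
    rintro ⟨j, hj, -, hqj⟩
    have hjn := walk_layerTop hq0 hqn hw hinj (j+1) (by omega) (by rw [hqj])
    rw [hjn, hqn] at hqj
    exact hv (congrArg Prod.snd hqj).symm
  have c2 : ¬ ∃ j, j < n ∧ ¬ Fwd q j ∧ q j = ((2*L+1 : ℕ), v) := by
    rintro ⟨j, hj, -, hqj⟩
    have := walk_layerTop hq0 hqn hw hinj j hj.le (by rw [hqj])
    omega
  rw [if_neg c1, if_neg c2]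
  omega

include hF hq0 hqn ha hb hw hinj in
theorem toggled_isFlow : IsFlow step L A B (toggled F q n) (t+1) := by
  refine ⟨?_, cons_toggled hF hq0 hqn hw hinj, ?_, ?_, ?_⟩
  · intro e he
    rcases Finset.mem_union.mp he with h | h
    · exact hF.wf e (Finset.mem_sdiff.mp h).1
    · simp only [fwdE, Finset.mem_image, Finset.mem_filter, Finset.mem_range] at h
      obtain ⟨i, ⟨hi, hfi⟩, rfl⟩ := h
      rcases step_cases hw hi with ⟨-, hd, -⟩ | ⟨hnf, -, -⟩
      · exact hd
      · exact absurd hfi hnf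
  · intro v hv
    by_cases hva : v = a
    · subst hva
      exact ha
    · rw [out_toggled_layer0_ne hq0 hqn hw hinj v hva] at hv
      exact hF.srcA v hv
  · intro v hv
    by_cases hvb : v = b
    · subst hvb
      exact hb
    · rw [in_toggled_top_ne hq0 hqn hw hinj v hvb] at hv
      exact hF.snkB v hv
  · have hset : A.filter (fun v => 0 < outF (toggled F q n) ((0:ℕ), v))
        = insert a (A.filter (fun v => 0 < outF F ((0:ℕ), v))) := by
      ext v
      simp only [Finset.mem_filter, Finset.mem_insert]
      by_cases hva : v = a
      · subst hva
        rw [out_toggled_source hq0 hqn hw hinj hF.wf]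
        exact ⟨fun _ => Or.inl rfl, fun _ => ⟨ha, by omega⟩⟩
      · rw [out_toggled_layer0_ne hq0 hqn hw hinj v hva]
        constructor
        · rintro ⟨hvA, hpos⟩
          exact Or.inr ⟨hvA, hpos⟩
        · rintro (h | ⟨hvA, hpos⟩)
          · exact absurd h hva
          · exact ⟨hvA, hpos⟩
    have hnm : a ∉ A.filter (fun v => 0 < outF F ((0:ℕ), v)) := by
      intro hmem
      have := (Finset.mem_filter.mp hmem).2
      rw [outF_source_zero hq0 hqn hw hF.wf] at this
      omega
    rw [hset, Finset.card_insert_of_notMem hnm, hF.val]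

end ToggleMain

end Toggle

section Walks

theorem reach_to_walk {α : Type*} {r : α → α → Prop} {x y : α}
    (h : Relation.ReflTransGen r x y) :
    ∃ n : ℕ, ∃ q : ℕ → α, q 0 = x ∧ q n = y ∧ ∀ i < n, r (q i) (q (i+1)) := by
  induction h with
  | refl => exact ⟨0, fun _ => x, rfl, rfl, by omega⟩
  | @tail b c hxb hbc ih =>
    obtain ⟨n, q, h0, hn, hs⟩ := ih
    refine ⟨n+1, fun i => if i ≤ n then q i else c, by simp [h0], by simp, ?_⟩
    intro i hi
    by_cases hin : i < n
    · simp only [if_pos hin.le, if_pos (by omega : i + 1 ≤ n)]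
      exact hs i hin
    · have hieq : i = n := by omega
      subst hieq
      simp only [if_pos le_rfl, if_neg (by omega : ¬ i + 1 ≤ i)]
      rw [hn]
      exact hbc

theorem walk_to_inj_walk {α : Type*} {r : α → α → Prop} {x y : α} :
    ∀ n : ℕ, ∀ q : ℕ → α, q 0 = x → q n = y → (∀ i < n, r (q i) (q (i+1))) →
    ∃ m : ℕ, ∃ p : ℕ → α, p 0 = x ∧ p m = y ∧ (∀ i < m, r (p i) (p (i+1))) ∧
      (∀ i ≤ m, ∀ j ≤ m, p i = p j → i = j) := by
  intro n
  induction n using Nat.strong_induction_on with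
  | _ n ih =>
    intro q h0 hn hs
    by_cases hinj : ∀ i ≤ n, ∀ j ≤ n, q i = q j → i = j
    · exact ⟨n, q, h0, hn, hs, hinj⟩
    · push_neg at hinj
      obtain ⟨i, hi, j, hj, heq, hne⟩ := hinj
      -- wlog i < j
      rcases Nat.lt_or_ge i j with hij | hij
      · have hm : n - (j - i) < n := by omega
        refine ih (n - (j - i)) hm (fun t => if t ≤ i then q t else q (t + (j - i))) ?_ ?_ ?_
        · simp [h0]
        · by_cases hc : n - (j - i) ≤ i
          · have h1 : n - (j-i) = i := by omega
            have h2 : j = n := by omega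
            rw [if_pos hc, h1, heq, h2, hn]
          · rw [if_neg hc]
            have : n - (j - i) + (j - i) = n := by omega
            rw [this, hn]
        · intro t ht
          by_cases hc1 : t + 1 ≤ i
          · rw [if_pos (by omega : t ≤ i), if_pos hc1]
            exact hs t (by omega)
          · by_cases hc2 : t ≤ i
            · have hti : t = i := by omega
              rw [if_pos hc2, if_neg hc1, hti, heq]
              have : i + 1 + (j - i) = j + 1 := by omega
              rw [this]
              exact hs j (by omega)
            · rw [if_neg hc2, if_neg (by omega : ¬ t + 1 ≤ i)]
              have : t + 1 + (j - i) = t + (j - i) + 1 := by omega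
              rw [this]
              exact hs (t + (j - i)) (by omega)
      · have hji : j < i := by omega
        have hm : n - (i - j) < n := by omega
        refine ih (n - (i - j)) hm (fun t => if t ≤ j then q t else q (t + (i - j))) ?_ ?_ ?_
        · simp [h0]
        · by_cases hc : n - (i - j) ≤ j
          · have h1 : n - (i-j) = j := by omega
            have h2 : i = n := by omega
            rw [if_pos hc, h1, ← heq, h2, hn]
          · rw [if_neg hc]
            have : n - (i - j) + (i - j) = n := by omega
            rw [this, hn]
        · intro t ht
          by_cases hc1 : t + 1 ≤ j
          · rw [if_pos (by omega : t ≤ j), if_pos hc1]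
            exact hs t (by omega)
          · by_cases hc2 : t ≤ j
            · have hti : t = j := by omega
              rw [if_pos hc2, if_neg hc1, hti, heq.symm]
              have : j + 1 + (i - j) = i + 1 := by omega
              rw [this]
              exact hs i (by omega)
            · rw [if_neg hc2, if_neg (by omega : ¬ t + 1 ≤ j)]
              have : t + 1 + (i - j) = t + (i - j) + 1 := by omega
              rw [this]
              exact hs (t + (i - j)) (by omega)

end Walks

section CutArg

variable {step : ℕ → T → T → Prop} {L : ℕ} {A B : Finset T}
variable {F : Finset (Node T × Node T)} {t k : ℕ}

noncomputable def predN (F : Finset (Node T × Node T)) (x : Node T) : Node T :=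
  if h : (F.filter (fun e => e.2 = x)).Nonempty then h.choose.1 else x

theorem predN_mem {x : Node T} (hx : 1 ≤ inF F x) : (predN F x, x) ∈ F := by
  have h : (F.filter (fun e => e.2 = x)).Nonempty := Finset.card_pos.mp hx
  have hspec := h.choose_spec
  rw [Finset.mem_filter] at hspec
  rw [predN, dif_pos h]
  have : (h.choose.1, x) = h.choose := Prod.ext rfl hspec.2.symm
  rw [this]
  exact hspec.1

noncomputable def srcAux (F : Finset (Node T × Node T)) (s : ℕ) (x : Node T) : Node T :=
  (predN F)^[s] x

theorem srcAux_succ (F : Finset (Node T × Node T)) (s : ℕ) (x : Node T) :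
    srcAux F (s+1) x = predN F (srcAux F s x) := Function.iterate_succ_apply' _ _ _

theorem srcAux_add (F : Finset (Node T × Node T)) (s s' : ℕ) (x : Node T) :
    srcAux F (s + s') x = srcAux F s (srcAux F s' x) := Function.iterate_add_apply _ _ _ _

theorem edge_layer (hFl : IsFlow step L A B F t) {e : Node T × Node T} (he : e ∈ F) :
    e.2.1 = e.1.1 + 1 ∧ e.1.1 < 2*L+1 := ⟨(hFl.wf e he).2.1, (hFl.wf e he).1⟩

/-- carrying node: positive in-degree at positive layer implies the whole
backward chain exists. -/
theorem srcAux_chain (hFl : IsFlow step L A B F t) :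
    ∀ j : ℕ, ∀ x : Node T, x.1 = j → (0 < j → 1 ≤ inF F x) →
    ∀ s ≤ j, (srcAux F s x).1 = j - s ∧ (0 < j - s → 1 ≤ inF F (srcAux F s x)) ∧
      (s < j → (srcAux F (s+1) x, srcAux F s x) ∈ F) := by
  intro j x hxj hcar
  intro s
  induction s with
  | zero =>
    intro _
    refine ⟨by simpa [srcAux] using hxj, by simpa [srcAux] using hcar, ?_⟩
    intro hs
    rw [srcAux_succ]
    exact predN_mem (by simpa [srcAux] using hcar hs)
  | succ s ihs =>
    intro hs1
    obtain ⟨hl, hc, hedge⟩ := ihs (by omega)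
    have hmem : (srcAux F (s+1) x, srcAux F s x) ∈ F := hedge (by omega)
    have hlay : (srcAux F s x).1 = (srcAux F (s+1) x).1 + 1 := (edge_layer hFl hmem).1
    have hlay2 : (srcAux F (s+1) x).1 < 2*L+1 := (edge_layer hFl hmem).2
    have hl1 : (srcAux F (s+1) x).1 = j - (s+1) := by omega
    have hc1 : 0 < j - (s+1) → 1 ≤ inF F (srcAux F (s+1) x) := by
      intro hpos
      have hout : 1 ≤ outF F (srcAux F (s+1) x) := le_outF_of_mem hmem rfl
      have := hFl.cons (srcAux F (s+1) x) (by omega) (by omega)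
      omega
    refine ⟨hl1, hc1, ?_⟩
    intro hlt
    rw [srcAux_succ]
    exact predN_mem (hc1 (by omega))

theorem srcAux_unique (hFl : IsFlow step L A B F t) :
    ∀ j : ℕ, ∀ x x' : Node T, x.1 = j → x'.1 = j →
    (0 < j → 1 ≤ inF F x) → (0 < j → 1 ≤ inF F x') →
    srcAux F j x = srcAux F j x' → x = x' := by
  intro j
  induction j with
  | zero =>
    intro x x' _ _ _ _ h
    simpa [srcAux] using h
  | succ j ihj =>
    intro x x' hx hx' hcx hcx' heq
    have hix : 1 ≤ inF F x := hcx (by omega)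
    have hix' : 1 ≤ inF F x' := hcx' (by omega)
    have hmx : (predN F x, x) ∈ F := predN_mem hix
    have hmx' : (predN F x', x') ∈ F := predN_mem hix'
    have hlx : (predN F x).1 = j := by
      have h5 : x.1 = (predN F x).1 + 1 := (edge_layer hFl hmx).1
      omega
    have hlx' : (predN F x').1 = j := by
      have h5 : x'.1 = (predN F x').1 + 1 := (edge_layer hFl hmx').1
      omega
    have hcpx : 0 < j → 1 ≤ inF F (predN F x) := by
      intro hj
      have hout : 1 ≤ outF F (predN F x) := le_outF_of_mem hmx rfl
      have hlt : (predN F x).1 < 2*L+1 := (edge_layer hFl hmx).2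
      have := hFl.cons (predN F x) (by omega) (by omega)
      omega
    have hcpx' : 0 < j → 1 ≤ inF F (predN F x') := by
      intro hj
      have hout : 1 ≤ outF F (predN F x') := le_outF_of_mem hmx' rfl
      have hlt : (predN F x').1 < 2*L+1 := (edge_layer hFl hmx').2
      have := hFl.cons (predN F x') (by omega) (by omega)
      omega
    have heq' : srcAux F j (predN F x) = srcAux F j (predN F x') := by
      have e1 : srcAux F (j+1) x = srcAux F j (predN F x) := Function.iterate_succ_apply _ _ _
      have e2 : srcAux F (j+1) x' = srcAux F j (predN F x') := Function.iterate_succ_apply _ _ _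
      rw [← e1, ← e2, heq]
    have hpp : predN F x = predN F x' := ihj (predN F x) (predN F x') hlx hlx' hcpx hcpx' heq'
    have h1 : (predN F x, x) ∈ F.filter (fun e => e.1 = predN F x) :=
      Finset.mem_filter.mpr ⟨hmx, rfl⟩
    have h2 : (predN F x, x') ∈ F.filter (fun e => e.1 = predN F x) := by
      refine Finset.mem_filter.mpr ⟨?_, rfl⟩
      rw [hpp]
      exact hmx'
    have := Finset.card_le_one.mp (hFl.outLe (predN F x)) _ h1 _ h2
    exact congrArg Prod.snd this

theorem srcAux_reach (hFl : IsFlow step L A B F t) {j : ℕ} {x : Node T}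
    (hx : x.1 = j) (hcar : 0 < j → 1 ≤ inF F x) (hR : Reach step L A F x) :
    ∀ s ≤ j, Reach step L A F (srcAux F s x) := by
  intro s
  induction s with
  | zero => intro _; simpa [srcAux] using hR
  | succ s ihs =>
    intro hs1
    have hR1 := ihs (by omega)
    have hedge := (srcAux_chain hFl j x hx hcar s (by omega)).2.2 (by omega)
    obtain ⟨a, ha, hrtg⟩ := hR1
    refine ⟨a, ha, hrtg.tail ?_⟩
    exact Or.inr ⟨hFl.wf _ hedge, hedge⟩

theorem crossing_aux (hFl : IsFlow step L A B F t)
    (X : Finset (Node T × Node T))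
    (hX : ∀ e ∈ X, e ∈ F ∧ Reach step L A F e.1 ∧ ¬ Reach step L A F e.2) :
    ∀ e ∈ X, ∀ e' ∈ X, e.1.1 ≤ e'.1.1 →
      srcAux F e.1.1 e.1 = srcAux F e'.1.1 e'.1 → e = e' := by
  intro e he e' he' hle heq
  obtain ⟨heF, heR, heNR⟩ := hX e he
  obtain ⟨heF', heR', heNR'⟩ := hX e' he'
  have hcar : 0 < e.1.1 → 1 ≤ inF F e.1 := by
    intro h0
    have hout : 1 ≤ outF F e.1 := le_outF_of_mem heF rfl
    have hlt : e.1.1 < 2*L+1 := (edge_layer hFl heF).2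
    have := hFl.cons e.1 h0 hlt
    omega
  have hcar' : 0 < e'.1.1 → 1 ≤ inF F e'.1 := by
    intro h0
    have hout : 1 ≤ outF F e'.1 := le_outF_of_mem heF' rfl
    have hlt : e'.1.1 < 2*L+1 := (edge_layer hFl heF').2
    have := hFl.cons e'.1 h0 hlt
    omega
  set j := e.1.1 with hj
  set j' := e'.1.1 with hj'
  set z := srcAux F (j' - j) e'.1 with hz
  have hchain := srcAux_chain hFl j' e'.1 rfl hcar'
  have hzl : z.1 = j := by
    have := (hchain (j' - j) (by omega)).1
    rw [hz]
    omega
  have hzc : 0 < j → 1 ≤ inF F z := by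
    intro h0
    have := (hchain (j' - j) (by omega)).2.1 (by omega)
    rwa [hz]
  have hsrcz : srcAux F j z = srcAux F j' e'.1 := by
    rw [hz, ← srcAux_add]
    congr 1
    omega
  have hez : e.1 = z := by
    refine srcAux_unique hFl j e.1 z rfl hzl hcar hzc ?_
    rw [hsrcz, ← heq]
  rcases Nat.eq_or_lt_of_le hle with hjj | hjj
  · -- same layer: z = e'.1, so tails equal, edges equal
    have hz0 : z = e'.1 := by
      rw [hz]
      have : j' - j = 0 := by omega
      rw [this]
      rfl
    have htail : e.1 = e'.1 := by rw [hez, hz0]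
    have h1 : e ∈ F.filter (fun x => x.1 = e.1) := Finset.mem_filter.mpr ⟨heF, rfl⟩
    have h2 : e' ∈ F.filter (fun x => x.1 = e.1) := Finset.mem_filter.mpr ⟨heF', htail.symm⟩
    exact Finset.card_le_one.mp (hFl.outLe e.1) _ h1 _ h2
  · -- strictly below: derive contradiction
    exfalso
    set w := srcAux F (j' - j - 1) e'.1 with hw
    have hwedge : (srcAux F (j' - j - 1 + 1) e'.1, w) ∈ F := (hchain (j' - j - 1) (by omega)).2.2 (by omega)
    have hzw : (z, w) ∈ F := by
      have : j' - j - 1 + 1 = j' - j := by omega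
      rwa [this] at hwedge
    have hew : (e.1, w) ∈ F := by rwa [← hez] at hzw
    have h1 : (e.1, w) ∈ F.filter (fun x => x.1 = e.1) := Finset.mem_filter.mpr ⟨hew, rfl⟩
    have h2 : e ∈ F.filter (fun x => x.1 = e.1) := Finset.mem_filter.mpr ⟨heF, rfl⟩
    have hweq : w = e.2 := by
      have := Finset.card_le_one.mp (hFl.outLe e.1) _ h1 _ h2
      exact congrArg Prod.snd this
    have hwR : Reach step L A F w := by
      rw [hw]
      exact srcAux_reach hFl rfl hcar' heR' (j' - j - 1) (by omega)
    rw [hweq] at hwR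
    exact heNR hwR

theorem flow_grow (hFl : IsFlow step L A B F t) (ht : t < k)
    (oracle : ∀ C : Finset (ℕ × T), C.card < k →
      ∃ p : ℕ → T, p 0 ∈ A ∧ p L ∈ B ∧ (∀ i < L, step i (p i) (p (i+1))) ∧
        ∀ ℓ ≤ L, (ℓ, p ℓ) ∉ C) :
    ∃ F', IsFlow step L A B F' (t+1) := by
  classical
  by_cases hreach : ∃ b ∈ B, Reach step L A F (2*L+1, b)
  · obtain ⟨b, hb, a, ha, hrtg⟩ := hreach
    obtain ⟨n0, q0, h00, h0n, h0s⟩ := reach_to_walk hrtg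
    obtain ⟨n, q, h0, hn, hs, hinj⟩ := walk_to_inj_walk n0 q0 h00 h0n h0s
    exact ⟨toggled F q n, toggled_isFlow hFl h0 hn ha hb hs hinj⟩
  · exfalso
    set X : Finset (Node T × Node T) :=
      F.filter (fun e => Reach step L A F e.1 ∧ ¬ Reach step L A F e.2) with hXdef
    have hX : ∀ e ∈ X, e ∈ F ∧ Reach step L A F e.1 ∧ ¬ Reach step L A F e.2 := by
      intro e he
      have := Finset.mem_filter.mp he
      exact ⟨this.1, this.2.1, this.2.2⟩
    -- X.card ≤ t
    have hXcard : X.card ≤ t := by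
      rw [← hFl.val]
      apply Finset.card_le_card_of_injOn (fun e => (srcAux F e.1.1 e.1).2)
      · intro e he
        obtain ⟨heF, heR, heNR⟩ := hX e he
        have hcar : 0 < e.1.1 → 1 ≤ inF F e.1 := by
          intro h0
          have hout : 1 ≤ outF F e.1 := le_outF_of_mem heF rfl
          have hlt : e.1.1 < 2*L+1 := (edge_layer hFl heF).2
          have := hFl.cons e.1 h0 hlt
          omega
        have hchain := srcAux_chain hFl e.1.1 e.1 rfl hcar
        have hsl : (srcAux F e.1.1 e.1).1 = 0 := by
          have := (hchain e.1.1 le_rfl).1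
          omega
        have hnode : ((0:ℕ), (srcAux F e.1.1 e.1).2) = srcAux F e.1.1 e.1 :=
          Prod.ext hsl.symm rfl
        have hout0 : 1 ≤ outF F (srcAux F e.1.1 e.1) := by
          rcases Nat.eq_zero_or_pos e.1.1 with h0 | h0
          · have hz : srcAux F e.1.1 e.1 = e.1 := by
              rw [h0]
              rfl
            rw [hz]
            exact le_outF_of_mem heF rfl
          · have hedge := (hchain (e.1.1 - 1) (by omega)).2.2 (by omega)
            have heq1 : e.1.1 - 1 + 1 = e.1.1 := by omega
            rw [heq1] at hedge
            exact le_outF_of_mem hedge rfl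
        rw [Finset.mem_coe, Finset.mem_filter]
        constructor
        · apply hFl.srcA
          rw [hnode]
          exact hout0
        · rw [hnode]
          exact hout0
      · intro e he e' he' heq
        have heqn : srcAux F e.1.1 e.1 = srcAux F e'.1.1 e'.1 := by
          have hcar : ∀ x ∈ X, (srcAux F x.1.1 x.1).1 = 0 := by
            intro x hx'
            obtain ⟨hxF, -, -⟩ := hX x hx'
            have hcarx : 0 < x.1.1 → 1 ≤ inF F x.1 := by
              intro h0
              have hout : 1 ≤ outF F x.1 := le_outF_of_mem hxF rfl
              have hlt : x.1.1 < 2*L+1 := (edge_layer hFl hxF).2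
              have := hFl.cons x.1 h0 hlt
              omega
            have := (srcAux_chain hFl x.1.1 x.1 rfl hcarx x.1.1 le_rfl).1
            omega
          exact Prod.ext (by rw [hcar e he, hcar e' he']) heq
        rcases le_total e.1.1 e'.1.1 with hle | hle
        · exact crossing_aux hFl X hX e he e' he' hle heqn
        · exact (crossing_aux hFl X hX e' he' e he hle heqn.symm).symm
    -- build the cut for the oracle
    set C : Finset (ℕ × T) := X.image (fun e => (e.1.1 / 2, e.1.2)) with hCdef
    have hCcard : C.card < k := lt_of_le_of_lt (Finset.card_image_le.trans hXcard) ht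
    obtain ⟨p, hp0, hpL, hpstep, hpavoid⟩ := oracle C hCcard
    -- key: edges along p are never blocked
    have hedge_reach : ∀ (x y : Node T), dstep step L x y → x.1 / 2 = y.1 / 2 ∨ True →
      Reach step L A F x → (x.1 / 2, x.2) ∉ C → Reach step L A F y := by
      intro x y hd _ hRx hnC
      by_cases hmem : (x, y) ∈ F
      · by_cases hRy : Reach step L A F y
        · exact hRy
        · exfalso
          apply hnC
          rw [hCdef]
          refine Finset.mem_image.mpr ⟨(x, y), ?_, rfl⟩
          rw [hXdef]
          exact Finset.mem_filter.mpr ⟨hmem, hRx, hRy⟩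
      · obtain ⟨a, ha, hrtg⟩ := hRx
        exact ⟨a, ha, hrtg.tail (Or.inl ⟨hd, hmem⟩)⟩
    have main : ∀ ℓ : ℕ, ℓ ≤ L →
        Reach step L A F (2*ℓ, p ℓ) ∧ Reach step L A F (2*ℓ+1, p ℓ) := by
      intro ℓ
      induction ℓ with
      | zero =>
        intro _
        have h1 : Reach step L A F (0, p 0) := ⟨p 0, hp0, Relation.ReflTransGen.refl⟩
        refine ⟨h1, ?_⟩
        refine hedge_reach (0, p 0) (1, p 0) ?_ (Or.inr trivial) h1 ?_
        · exact ⟨by omega, rfl, Or.inl ⟨by omega, rfl⟩⟩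
        · have : ((0:ℕ)/2, p 0) = ((0:ℕ), p 0) := by norm_num
          rw [this]
          exact hpavoid 0 (by omega)
      | succ ℓ ihl =>
        intro hl1
        obtain ⟨-, h2⟩ := ihl (by omega)
        have hstep : Reach step L A F (2*(ℓ+1), p (ℓ+1)) := by
          refine hedge_reach (2*ℓ+1, p ℓ) (2*(ℓ+1), p (ℓ+1)) ?_ (Or.inr trivial) h2 ?_
          · refine ⟨by omega, by omega, Or.inr ⟨by omega, ?_⟩⟩
            have : (2*ℓ+1)/2 = ℓ := by omega
            rw [this]
            exact hpstep ℓ (by omega)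
          · have : ((2*ℓ+1)/2, p ℓ) = (ℓ, p ℓ) := by
              congr 1
              omega
            rw [this]
            exact hpavoid ℓ (by omega)
        refine ⟨hstep, ?_⟩
        refine hedge_reach (2*(ℓ+1), p (ℓ+1)) (2*(ℓ+1)+1, p (ℓ+1)) ?_ (Or.inr trivial) hstep ?_
        · exact ⟨by omega, rfl, Or.inl ⟨by omega, rfl⟩⟩
        · have : ((2*(ℓ+1))/2, p (ℓ+1)) = (ℓ+1, p (ℓ+1)) := by
            congr 1
            omega
          rw [this]
          exact hpavoid (ℓ+1) (by omega)
    have hfinal := (main L le_rfl).2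
    exact hreach ⟨p L, hpL, by rwa [show 2*L+1 = 2*L+1 from rfl] at hfinal⟩

theorem isFlow_empty : IsFlow step L A B (∅ : Finset (Node T × Node T)) 0 := by
  refine ⟨?_, ?_, ?_, ?_, ?_⟩
  · intro e he
    simp at he
  · intro n _ _
    simp [outF, inF]
  · intro v hv
    simp [outF] at hv
  · intro v hv
    simp [inF] at hv
  · rw [Finset.card_eq_zero, Finset.filter_eq_empty_iff]
    intro a _
    simp [outF]

theorem exists_flow (hk : ∀ C : Finset (ℕ × T), C.card < k →
      ∃ p : ℕ → T, p 0 ∈ A ∧ p L ∈ B ∧ (∀ i < L, step i (p i) (p (i+1))) ∧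
        ∀ ℓ ≤ L, (ℓ, p ℓ) ∉ C) :
    ∀ t ≤ k, ∃ F : Finset (Node T × Node T), IsFlow step L A B F t := by
  intro t
  induction t with
  | zero => exact fun _ => ⟨∅, isFlow_empty⟩
  | succ t iht =>
    intro ht
    obtain ⟨F, hF⟩ := iht (by omega)
    exact flow_grow hF (by omega) hk

section Extract

variable {step : ℕ → T → T → Prop} {L : ℕ} {A B : Finset T}
variable {F : Finset (Node T × Node T)} {t k : ℕ}

noncomputable def nxt (F : Finset (Node T × Node T)) (x : Node T) : Node T :=
  if h : (F.filter (fun e => e.1 = x)).Nonempty then h.choose.2 else x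

theorem nxt_mem {x : Node T} (hx : 1 ≤ outF F x) : (x, nxt F x) ∈ F := by
  have h : (F.filter (fun e => e.1 = x)).Nonempty := Finset.card_pos.mp hx
  have hspec := h.choose_spec
  rw [Finset.mem_filter] at hspec
  rw [nxt, dif_pos h]
  have : (x, h.choose.2) = h.choose := Prod.ext hspec.2.symm rfl
  rw [this]
  exact hspec.1

noncomputable def pth (F : Finset (Node T × Node T)) (a : T) : ℕ → T
  | 0 => a
  | (ℓ+1) => (nxt F (2*ℓ+1, pth F a ℓ)).2

theorem pth_cap (hFl : IsFlow step L A B F t) {a : T} (ha : 0 < outF F ((0:ℕ), a)) :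
    ∀ ℓ ≤ L, ((2*ℓ, pth F a ℓ), (2*ℓ+1, pth F a ℓ)) ∈ F ∧
      (ℓ < L → ((2*ℓ+1, pth F a ℓ), (2*(ℓ+1), pth F a (ℓ+1))) ∈ F) := by
  have hreal : ∀ ℓ < L, ((2*ℓ, pth F a ℓ), (2*ℓ+1, pth F a ℓ)) ∈ F →
      ((2*ℓ+1, pth F a ℓ), (2*(ℓ+1), pth F a (ℓ+1))) ∈ F := by
    intro ℓ hl hcap
    have hin : 1 ≤ inF F (2*ℓ+1, pth F a ℓ) := le_inF_of_mem hcap rfl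
    have hout : 1 ≤ outF F (2*ℓ+1, pth F a ℓ) := by
      have := hFl.cons (2*ℓ+1, pth F a ℓ) (by omega) (by omega)
      omega
    have hmem := nxt_mem hout
    have hlay : (nxt F (2*ℓ+1, pth F a ℓ)).1 = 2*(ℓ+1) := by
      have h5 : (nxt F (2*ℓ+1, pth F a ℓ)).1 = (2*ℓ+1 : ℕ) + 1 := (hFl.wf _ hmem).2.1
      omega
    have hnode : nxt F (2*ℓ+1, pth F a ℓ) = (2*(ℓ+1), pth F a (ℓ+1)) :=
      Prod.ext hlay rfl
    rwa [hnode] at hmem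
  intro ℓ
  induction ℓ with
  | zero =>
    intro _
    have hcap : (((0:ℕ), a), ((1:ℕ), a)) ∈ F := by
      have h : (F.filter (fun e => e.1 = ((0:ℕ), a))).Nonempty := Finset.card_pos.mp ha
      obtain ⟨e, he⟩ := h
      rw [Finset.mem_filter] at he
      have := edge_of_even step L F hFl.wf 0 (by omega) a e he.1 he.2
      rw [← this]
      exact he.1
    refine ⟨by simpa [pth] using hcap, fun hl => ?_⟩
    apply hreal 0 hl
    simpa [pth] using hcap
  | succ ℓ ihl =>
    intro hl1
    obtain ⟨hcap, hrealstep⟩ := ihl (by omega)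
    have hre := hrealstep (by omega)
    have hin : 1 ≤ inF F (2*(ℓ+1), pth F a (ℓ+1)) := le_inF_of_mem hre rfl
    have hout : 1 ≤ outF F (2*(ℓ+1), pth F a (ℓ+1)) := by
      have := hFl.cons (2*(ℓ+1), pth F a (ℓ+1)) (by omega) (by omega)
      omega
    have hcap1 : ((2*(ℓ+1), pth F a (ℓ+1)), (2*(ℓ+1)+1, pth F a (ℓ+1))) ∈ F := by
      have h : (F.filter (fun e => e.1 = ((2*(ℓ+1) : ℕ), pth F a (ℓ+1)))).Nonempty :=
        Finset.card_pos.mp hout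
      obtain ⟨e, he⟩ := h
      rw [Finset.mem_filter] at he
      have := edge_of_even step L F hFl.wf (2*(ℓ+1)) (by omega) (pth F a (ℓ+1)) e he.1 he.2
      rw [← this]
      exact he.1
    exact ⟨hcap1, fun hl => hreal (ℓ+1) hl hcap1⟩

theorem pth_step (hFl : IsFlow step L A B F t) {a : T} (ha : 0 < outF F ((0:ℕ), a)) :
    ∀ ℓ < L, step ℓ (pth F a ℓ) (pth F a (ℓ+1)) := by
  intro ℓ hl
  have hre := (pth_cap hFl ha ℓ (by omega)).2 hl
  have hd := hFl.wf _ hre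
  rcases hd.2.2 with ⟨hpar, -⟩ | ⟨-, hstep⟩
  · simp at hpar
  · have : (2*ℓ+1)/2 = ℓ := by omega
    rwa [this] at hstep

theorem pth_end (hFl : IsFlow step L A B F t) {a : T} (ha : 0 < outF F ((0:ℕ), a)) :
    pth F a L ∈ B := by
  have hcap := (pth_cap hFl ha L le_rfl).1
  exact hFl.snkB _ (le_inF_of_mem hcap rfl)

theorem pth_disjoint (hFl : IsFlow step L A B F t) {a a' : T}
    (ha : 0 < outF F ((0:ℕ), a)) (ha' : 0 < outF F ((0:ℕ), a')) (hne : a ≠ a') :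
    ∀ ℓ ≤ L, pth F a ℓ ≠ pth F a' ℓ := by
  intro ℓ
  induction ℓ with
  | zero =>
    intro _
    simpa [pth] using hne
  | succ ℓ ihl =>
    intro hl1
    intro heq
    have hre := (pth_cap hFl ha ℓ (by omega)).2 (by omega)
    have hre' := (pth_cap hFl ha' ℓ (by omega)).2 (by omega)
    rw [heq] at hre
    have h1 : ((2*ℓ+1, pth F a ℓ), (2*(ℓ+1), pth F a' (ℓ+1)))
        ∈ F.filter (fun e => e.2 = ((2*(ℓ+1) : ℕ), pth F a' (ℓ+1))) :=
      Finset.mem_filter.mpr ⟨hre, rfl⟩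
    have h2 : ((2*ℓ+1, pth F a' ℓ), (2*(ℓ+1), pth F a' (ℓ+1)))
        ∈ F.filter (fun e => e.2 = ((2*(ℓ+1) : ℕ), pth F a' (ℓ+1))) :=
      Finset.mem_filter.mpr ⟨hre', rfl⟩
    have := Finset.card_le_one.mp (hFl.inLe (2*(ℓ+1), pth F a' (ℓ+1))) _ h1 _ h2
    have htails : pth F a ℓ = pth F a' ℓ := by
      have := congrArg (fun e => (Prod.fst e).2) this
      simpa using this
    exact ihl (by omega) htails

end Extract

end CutArg

theorem abstract_routing {step : ℕ → T → T → Prop} {L k : ℕ} {A B : Finset T}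
    (hAk : A.card = k) (hBk : B.card = k)
    (oracle : ∀ C : Finset (ℕ × T), C.card < k →
      ∃ p : ℕ → T, p 0 ∈ A ∧ p L ∈ B ∧ (∀ i < L, step i (p i) (p (i+1))) ∧
        ∀ ℓ ≤ L, (ℓ, p ℓ) ∉ C) :
    ∃ P : T → ℕ → T, (∀ a ∈ A, P a 0 = a) ∧
      (∀ a ∈ A, ∀ i, i < L → step i (P a i) (P a (i + 1))) ∧
      (∀ a ∈ A, ∀ a' ∈ A, a ≠ a' → ∀ i, i ≤ L → P a i ≠ P a' i) ∧
      A.image (fun a => P a L) = B := by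
  obtain ⟨F, hFl⟩ := exists_flow oracle k le_rfl
  have hsrc : ∀ a ∈ A, 0 < outF F ((0:ℕ), a) := by
    have hsub : A.filter (fun a => 0 < outF F ((0:ℕ), a)) = A := by
      apply Finset.eq_of_subset_of_card_le (Finset.filter_subset _ _)
      rw [hFl.val, hAk]
    intro a haA
    have : a ∈ A.filter (fun a => 0 < outF F ((0:ℕ), a)) := by
      rw [hsub]
      exact haA
    exact (Finset.mem_filter.mp this).2
  refine ⟨fun a => pth F a, fun a _ => rfl, ?_, ?_, ?_⟩
  · intro a haA i hi
    exact pth_step hFl (hsrc a haA) i hi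
  · intro a haA a' haA' hne i hi
    exact pth_disjoint hFl (hsrc a haA) (hsrc a' haA') hne i hi
  · apply Finset.eq_of_subset_of_card_le
    · intro b hb
      obtain ⟨a, haA, rfl⟩ := Finset.mem_image.mp hb
      exact pth_end hFl (hsrc a haA)
    · rw [hBk]
      rw [Finset.card_image_of_injOn]
      · rw [hAk]
      · intro a haA a' haA' heq
        by_contra hne
        exact pth_disjoint hFl (hsrc a haA) (hsrc a' haA') hne L le_rfl heq

section FiberSum

variable {T : Type*} [DecidableEq T] [Fintype T]

theorem sum_filter_card (Q : T → T → Prop) [DecidablePred fun p : T × T => Q p.1 p.2]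
    [∀ a, DecidablePred (Q a)] :
    ∑ a : T, (Finset.univ.filter (fun y => Q a y)).card
      = ((Finset.univ ×ˢ Finset.univ).filter (fun p : T × T => Q p.1 p.2)).card := by
  rw [Finset.card_eq_sum_card_fiberwise
    (f := Prod.fst) (t := Finset.univ) (fun p _ => Finset.mem_univ _)]
  apply Finset.sum_congr rfl
  intro a _
  apply Finset.card_bij (fun y (_ : y ∈ Finset.univ.filter (fun y => Q a y)) => (a, y))
  · intro y hy
    simp only [Finset.mem_filter, Finset.mem_univ, true_and] at hy
    simp only [Finset.mem_filter, Finset.mem_product, Finset.mem_univ, true_and, and_self]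
    exact ⟨hy, trivial⟩
  · intro y _ y' _ h
    exact congrArg Prod.snd h
  · intro p hp
    simp only [Finset.mem_filter, Finset.mem_product, Finset.mem_univ, true_and, and_self] at hp
    refine ⟨p.2, ?_, ?_⟩
    · simp only [Finset.mem_filter, Finset.mem_univ, true_and]
      have h6 := hp.1
      rwa [hp.2] at h6
    · exact Prod.ext hp.2.symm rfl

end FiberSum

section Butterfly

variable {d : ℕ}

def mixL (y a : Fin d → Bool) (ℓ : ℕ) : Fin d → Bool :=
  fun i => if (i : ℕ) < ℓ then y i else a i

def mixR (x b : Fin d → Bool) (j : ℕ) : Fin d → Bool :=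
  fun i => if (i : ℕ) < j then b i else x i

theorem mixL_zero (y a : Fin d → Bool) : mixL y a 0 = a :=
  funext fun i => if_neg (by omega)

theorem mixL_full (y a : Fin d → Bool) {ℓ : ℕ} (hℓ : d ≤ ℓ) : mixL y a ℓ = y :=
  funext fun i => if_pos (lt_of_lt_of_le i.2 hℓ)

theorem mixR_full (x b : Fin d → Bool) {j : ℕ} (hj : d ≤ j) : mixR x b j = b :=
  funext fun i => if_pos (lt_of_lt_of_le i.2 hj)

theorem cardT : (Finset.univ : Finset (Fin d → Bool)).card = 2 ^ d := by
  rw [Finset.card_univ, Fintype.card_fun]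
  simp

theorem cardL (ℓ : ℕ) (v : Fin d → Bool) :
    ((Finset.univ ×ˢ Finset.univ).filter
      (fun p : (Fin d → Bool) × (Fin d → Bool) => mixL p.2 p.1 ℓ = v)).card ≤ 2 ^ d := by
  rw [← cardT]
  apply Finset.card_le_card_of_injOn (fun p => mixL p.1 p.2 ℓ) (fun p _ => Finset.mem_univ _)
  intro p hp p' hp' hf
  simp only [Finset.coe_filter, Set.mem_setOf_eq] at hp hp'
  have key : ∀ i : Fin d, p.1 i = p'.1 i ∧ p.2 i = p'.2 i := by
    intro i
    by_cases hi : (i : ℕ) < ℓ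
    · constructor
      · have h1 := congrFun hf i
        simpa [mixL, if_pos hi] using h1
      · have h1 := congrFun hp.2 i
        have h2 := congrFun hp'.2 i
        simp only [mixL, if_pos hi] at h1 h2
        rw [h1, h2]
    · constructor
      · have h1 := congrFun hp.2 i
        have h2 := congrFun hp'.2 i
        simp only [mixL, if_neg hi] at h1 h2
        rw [h1, h2]
      · have h1 := congrFun hf i
        simpa [mixL, if_neg hi] using h1
  exact Prod.ext (funext fun i => (key i).1) (funext fun i => (key i).2)

theorem cardR (ρ : (Fin d → Bool) ≃ (Fin d → Bool)) (j : ℕ) (v : Fin d → Bool) :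
    ((Finset.univ ×ˢ Finset.univ).filter
      (fun p : (Fin d → Bool) × (Fin d → Bool) => mixR (ρ p.2) p.1 j = v)).card ≤ 2 ^ d := by
  rw [← cardT]
  apply Finset.card_le_card_of_injOn (fun p (i : Fin d) => if (i : ℕ) < j then (ρ p.2) i else p.1 i)
    (fun p _ => Finset.mem_univ _)
  intro p hp p' hp' hf
  simp only [Finset.coe_filter, Set.mem_setOf_eq] at hp hp'
  have key1 : ρ p.2 = ρ p'.2 := by
    funext i
    by_cases hi : (i : ℕ) < j
    · have h1 := congrFun hf i
      simpa [if_pos hi] using h1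
    · have h1 := congrFun hp.2 i
      have h2 := congrFun hp'.2 i
      simp only [mixR, if_neg hi] at h1 h2
      rw [h1, h2]
  have key2 : p.1 = p'.1 := by
    funext i
    by_cases hi : (i : ℕ) < j
    · have h1 := congrFun hp.2 i
      have h2 := congrFun hp'.2 i
      simp only [mixR, if_pos hi] at h1 h2
      rw [h1, h2]
    · have h1 := congrFun hf i
      simpa [if_neg hi] using h1
  exact Prod.ext key2 (ρ.injective key1)

variable (ρ : (Fin d → Bool) ≃ (Fin d → Bool)) (C : Finset (ℕ × (Fin d → Bool)))

def badL (a : Fin d → Bool) : Finset (Fin d → Bool) :=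
  (C.filter (fun c => c.1 < d)).biUnion
    (fun c => Finset.univ.filter (fun y => mixL y a c.1 = c.2))

def badR (b : Fin d → Bool) : Finset (Fin d → Bool) :=
  (C.filter (fun c => d < c.1)).biUnion
    (fun c => Finset.univ.filter (fun y => mixR (ρ y) b (c.1 - d) = c.2))

def badM : Finset (Fin d → Bool) :=
  Finset.univ.filter (fun y => ((d : ℕ), y) ∈ C)

theorem sumL : ∑ a : Fin d → Bool, (badL C a).card ≤ (C.filter (fun c => c.1 < d)).card * 2^d := by
  calc ∑ a : Fin d → Bool, (badL C a).card
      ≤ ∑ a : Fin d → Bool, ∑ c ∈ C.filter (fun c => c.1 < d),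
          (Finset.univ.filter (fun y => mixL y a c.1 = c.2)).card :=
        Finset.sum_le_sum (fun a _ => Finset.card_biUnion_le)
    _ = ∑ c ∈ C.filter (fun c => c.1 < d), ∑ a : Fin d → Bool,
          (Finset.univ.filter (fun y => mixL y a c.1 = c.2)).card := Finset.sum_comm
    _ ≤ ∑ _c ∈ C.filter (fun c => c.1 < d), 2^d := by
        apply Finset.sum_le_sum
        intro c _
        rw [sum_filter_card (fun a y => mixL y a c.1 = c.2)]
        exact cardL c.1 c.2
    _ = (C.filter (fun c => c.1 < d)).card * 2^d := by
        rw [Finset.sum_const, smul_eq_mul]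

theorem sumR : ∑ b : Fin d → Bool, (badR ρ C b).card
    ≤ (C.filter (fun c => d < c.1)).card * 2^d := by
  calc ∑ b : Fin d → Bool, (badR ρ C b).card
      ≤ ∑ b : Fin d → Bool, ∑ c ∈ C.filter (fun c => d < c.1),
          (Finset.univ.filter (fun y => mixR (ρ y) b (c.1 - d) = c.2)).card :=
        Finset.sum_le_sum (fun b _ => Finset.card_biUnion_le)
    _ = ∑ c ∈ C.filter (fun c => d < c.1), ∑ b : Fin d → Bool,
          (Finset.univ.filter (fun y => mixR (ρ y) b (c.1 - d) = c.2)).card := Finset.sum_comm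
    _ ≤ ∑ _c ∈ C.filter (fun c => d < c.1), 2^d := by
        apply Finset.sum_le_sum
        intro c _
        rw [sum_filter_card (fun b y => mixR (ρ y) b (c.1 - d) = c.2)]
        exact cardR ρ (c.1 - d) c.2
    _ = (C.filter (fun c => d < c.1)).card * 2^d := by
        rw [Finset.sum_const, smul_eq_mul]

theorem badM_card : (badM C).card ≤ (C.filter (fun c => c.1 = d)).card := by
  apply Finset.card_le_card_of_injOn (fun y => ((d : ℕ), y))
  · intro y hy
    simp only [badM, Finset.mem_filter, Finset.mem_univ, true_and] at hy
    exact Finset.mem_filter.mpr ⟨by simpa using hy, rfl⟩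
  · intro y _ y' _ h
    exact congrArg Prod.snd h

theorem exists_small {T : Type*} [DecidableEq T] [Fintype T] {S : Finset T} {f : T → ℕ}
    {M k : ℕ} (hk : S.card = k) (hk0 : 0 < k) (hsum : ∑ a : T, f a ≤ M) :
    ∃ a ∈ S, k * f a ≤ M := by
  by_contra h
  push_neg at h
  have h1 : ∀ a ∈ S, M + 1 ≤ k * f a := fun a ha => h a ha
  have h2 : S.card * (M+1) ≤ ∑ a ∈ S, k * f a := by
    calc S.card * (M+1) = ∑ _a ∈ S, (M+1) := by rw [Finset.sum_const, smul_eq_mul]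
      _ ≤ ∑ a ∈ S, k * f a := Finset.sum_le_sum h1
  have h3 : ∑ a ∈ S, k * f a = k * ∑ a ∈ S, f a := by rw [Finset.mul_sum]
  have h4 : ∑ a ∈ S, f a ≤ ∑ a : T, f a :=
    Finset.sum_le_sum_of_subset (Finset.subset_univ S)
  have h5 : k * ∑ a ∈ S, f a ≤ k * M := Nat.mul_le_mul_left k (h4.trans hsum)
  rw [hk] at h2
  have h6 : k * (M+1) ≤ k * M := by omega
  have h7 : k * (M+1) = k * M + k := by ring
  omega

end Butterfly

section Oracle

variable {d : ℕ} (ρ : (Fin d → Bool) ≃ (Fin d → Bool))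

theorem oracle_holds (hd : 1 ≤ d) {k : ℕ} (hk2 : k ≤ 2^d)
    (A B : Finset (Fin d → Bool)) (hA : A.card = k) (hB : B.card = k) :
    ∀ C : Finset (ℕ × (Fin d → Bool)), C.card < k →
      ∃ p : ℕ → (Fin d → Bool), p 0 ∈ A ∧ p (2*d) ∈ B ∧
        (∀ i < 2*d, pairStep d ρ i (p i) (p (i+1))) ∧ ∀ ℓ ≤ 2*d, (ℓ, p ℓ) ∉ C := by
  intro C hC
  have hk0 : 0 < k := by omega
  obtain ⟨a, haA, haL⟩ := exists_small hA hk0 (sumL C)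
  obtain ⟨b, hbB, hbR⟩ := exists_small hB hk0 (sumR ρ C)
  have hsplit : (C.filter (fun c => c.1 < d)).card + (C.filter (fun c => c.1 = d)).card
      + (C.filter (fun c => d < c.1)).card ≤ C.card := by
    have hdisj1 : Disjoint (C.filter (fun c => c.1 < d)) (C.filter (fun c => c.1 = d)) := by
      rw [Finset.disjoint_left]
      intro c hc1 hc2
      have h1 := (Finset.mem_filter.mp hc1).2
      have h2 := (Finset.mem_filter.mp hc2).2
      omega
    have hdisj2 : Disjoint ((C.filter (fun c => c.1 < d)) ∪ (C.filter (fun c => c.1 = d)))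
        (C.filter (fun c => d < c.1)) := by
      rw [Finset.disjoint_left]
      intro c hc1 hc2
      have h2 := (Finset.mem_filter.mp hc2).2
      rcases Finset.mem_union.mp hc1 with h | h
      · have := (Finset.mem_filter.mp h).2
        omega
      · have := (Finset.mem_filter.mp h).2
        omega
    rw [← Finset.card_union_of_disjoint hdisj1, ← Finset.card_union_of_disjoint hdisj2]
    apply Finset.card_le_card
    refine Finset.union_subset (Finset.union_subset ?_ ?_) ?_ <;> exact Finset.filter_subset _ _
  have hMb : (badM C).card ≤ (C.filter (fun c => c.1 = d)).card := badM_card C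
  have hP0 : 0 < 2^d := by positivity
  have hbig : k * ((badL C a ∪ (badM C ∪ badR ρ C b)).card) < k * 2^d := by
    have hu : (badL C a ∪ (badM C ∪ badR ρ C b)).card
        ≤ (badL C a).card + ((badM C).card + (badR ρ C b).card) :=
      (Finset.card_union_le _ _).trans
        (Nat.add_le_add_left (Finset.card_union_le _ _) _)
    have step1 : k * ((badL C a ∪ (badM C ∪ badR ρ C b)).card)
        ≤ k * (badL C a).card + (k * (badM C).card + k * (badR ρ C b).card) := by
      calc k * ((badL C a ∪ (badM C ∪ badR ρ C b)).card)
          ≤ k * ((badL C a).card + ((badM C).card + (badR ρ C b).card)) :=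
            Nat.mul_le_mul_left _ hu
        _ = k * (badL C a).card + (k * (badM C).card + k * (badR ρ C b).card) := by ring
    have t1 : k * (badM C).card ≤ 2^d * (C.filter (fun c => c.1 = d)).card :=
      le_trans (Nat.mul_le_mul_left k hMb) (Nat.mul_le_mul_right _ hk2)
    have step2 : k * (badL C a).card + (k * (badM C).card + k * (badR ρ C b).card)
        ≤ ((C.filter (fun c => c.1 < d)).card + (C.filter (fun c => c.1 = d)).card
          + (C.filter (fun c => d < c.1)).card) * 2^d := by
      have expand : ((C.filter (fun c => c.1 < d)).card + (C.filter (fun c => c.1 = d)).card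
          + (C.filter (fun c => d < c.1)).card) * 2^d
          = (C.filter (fun c => c.1 < d)).card * 2^d
            + 2^d * (C.filter (fun c => c.1 = d)).card
            + (C.filter (fun c => d < c.1)).card * 2^d := by ring
      rw [expand]
      omega
    have step3 : ((C.filter (fun c => c.1 < d)).card + (C.filter (fun c => c.1 = d)).card
        + (C.filter (fun c => d < c.1)).card) * 2^d ≤ (k-1) * 2^d := by
      apply Nat.mul_le_mul_right
      omega
    have step4 : (k-1) * 2^d < k * 2^d := by
      exact (Nat.mul_lt_mul_right hP0).mpr (by omega)
    omega
  have hcard : (badL C a ∪ (badM C ∪ badR ρ C b)).card < 2^d :=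
    Nat.lt_of_mul_lt_mul_left hbig
  have hyex : ∃ y, y ∉ badL C a ∪ (badM C ∪ badR ρ C b) := by
    by_contra h
    push_neg at h
    have hsub : (Finset.univ : Finset (Fin d → Bool)) ⊆ badL C a ∪ (badM C ∪ badR ρ C b) :=
      fun y _ => h y
    have := Finset.card_le_card hsub
    rw [cardT] at this
    omega
  obtain ⟨y, hy⟩ := hyex
  have hyL : y ∉ badL C a := fun h => hy (Finset.mem_union_left _ h)
  have hyM : y ∉ badM C := fun h => hy (Finset.mem_union_right _ (Finset.mem_union_left _ h))
  have hyR : y ∉ badR ρ C b := fun h => hy (Finset.mem_union_right _ (Finset.mem_union_right _ h))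
  refine ⟨fun ℓ => if ℓ ≤ d then mixL y a ℓ else mixR (ρ y) b (ℓ - d), ?_, ?_, ?_, ?_⟩
  · simp only [if_pos (by omega : 0 ≤ d)]
    rw [mixL_zero]
    exact haA
  · simp only [if_neg (by omega : ¬ 2*d ≤ d)]
    have : 2*d - d = d := by omega
    rw [this, mixR_full _ _ le_rfl]
    exact hbB
  · intro i hi
    by_cases h1 : i < d
    · simp only [if_pos (by omega : i ≤ d), if_pos (by omega : i + 1 ≤ d)]
      rw [pairStep, dif_pos h1]
      intro j hj
      have hji : (j : ℕ) ≠ i := by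
        intro h
        exact hj (Fin.ext h)
      simp only [mixL]
      by_cases hlt : (j : ℕ) < i
      · rw [if_pos hlt, if_pos (by omega)]
      · rw [if_neg hlt, if_neg (by omega)]
    · by_cases h2 : i = d
      · simp only [if_pos (by omega : i ≤ d), if_neg (by omega : ¬ i + 1 ≤ d)]
        rw [pairStep, dif_neg (by omega : ¬ i < d), dif_pos (by omega : i < 2*d)]
        intro j hj
        have hji : (j : ℕ) ≠ i - d := by
          intro h
          exact hj (Fin.ext h)
        rw [if_pos h2, mixL_full _ _ (by omega)]
        have h4 : i + 1 - d = 1 := by omega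
        rw [h4]
        simp only [mixR]
        rw [if_neg (by omega)]
      · have h3 : d < i := by omega
        simp only [if_neg (by omega : ¬ i ≤ d), if_neg (by omega : ¬ i + 1 ≤ d)]
        rw [pairStep, dif_neg (by omega : ¬ i < d), dif_pos hi]
        intro j hj
        have hji : (j : ℕ) ≠ i - d := by
          intro h
          apply hj
          apply Fin.ext
          simp [h]
        rw [if_neg h2]
        simp only [mixR]
        have : i + 1 - d = (i - d) + 1 := by omega
        rw [this]
        by_cases hlt : (j : ℕ) < i - d
        · rw [if_pos hlt, if_pos (by omega)]
        · rw [if_neg hlt, if_neg (by omega)]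
  · intro ℓ hℓ hmem
    by_cases h1 : ℓ < d
    · apply hyL
      rw [badL]
      rw [Finset.mem_biUnion]
      refine ⟨(ℓ, if ℓ ≤ d then mixL y a ℓ else mixR (ρ y) b (ℓ - d)), ?_, ?_⟩
      · exact Finset.mem_filter.mpr ⟨hmem, h1⟩
      · refine Finset.mem_filter.mpr ⟨Finset.mem_univ _, ?_⟩
        simp only [if_pos (by omega : ℓ ≤ d)]
    · by_cases h2 : ℓ = d
      · apply hyM
        rw [badM]
        refine Finset.mem_filter.mpr ⟨Finset.mem_univ _, ?_⟩
        have hpd : (if ℓ ≤ d then mixL y a ℓ else mixR (ρ y) b (ℓ - d)) = y := by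
          rw [if_pos (by omega : ℓ ≤ d), mixL_full _ _ (by omega)]
        dsimp only at hmem
        rw [hpd] at hmem
        rwa [h2] at hmem
      · have h3 : d < ℓ := by omega
        apply hyR
        rw [badR]
        rw [Finset.mem_biUnion]
        refine ⟨(ℓ, if ℓ ≤ d then mixL y a ℓ else mixR (ρ y) b (ℓ - d)), ?_, ?_⟩
        · exact Finset.mem_filter.mpr ⟨hmem, h3⟩
        · refine Finset.mem_filter.mpr ⟨Finset.mem_univ _, ?_⟩
          simp only [if_neg (by omega : ¬ ℓ ≤ d)]

end Oracle

end LayeredMenger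

/-- Every pair of `d`-dimensional butterflies is a `(2^d − 2^m)`-concentrator
(`0 ≤ m ≤ d`): for any set `A` of input (layer-`0`) nodes and any set `B` of output
(layer-`2d`) nodes with `|A| = |B| = 2^d − 2^m`, there is a family of pairwise
vertex-disjoint directed paths from `A` onto `B`. -/
theorem pair_of_butterflies_complement_concentrator
    (d : ℕ) (hd : 1 ≤ d) (m : ℕ) (hm : m ≤ d)
    (ρ : (Fin d → Bool) ≃ (Fin d → Bool))
    (A B : Finset (Fin d → Bool))
    (hA : A.card = 2 ^ d - 2 ^ m) (hB : B.card = 2 ^ d - 2 ^ m) :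
    ∃ P : (Fin d → Bool) → ℕ → (Fin d → Bool),
      (∀ a ∈ A, P a 0 = a) ∧
      (∀ a ∈ A, ∀ i, i < 2 * d → pairStep d ρ i (P a i) (P a (i + 1))) ∧
      (∀ a ∈ A, ∀ a' ∈ A, a ≠ a' → ∀ i, i ≤ 2 * d → P a i ≠ P a' i) ∧
      A.image (fun a => P a (2 * d)) = B := by
  have hk2 : 2 ^ d - 2 ^ m ≤ 2 ^ d := Nat.sub_le _ _
  exact LayeredMenger.abstract_routing hA hB
    (LayeredMenger.oracle_holds ρ hd hk2 A B hA hB)
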